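/- Let t, r ∈ ℕ, v ∈ {0,1}^d, and let N ⊆ {0,1}^d be a finite set with δ(v,x) = t for every x ∈ N, such that the family {Δ(v,x) : x ∈ N} is a sunflower with core C, i.e., Δ(v,x) ∩ Δ(v,x') = C for any two distinct x, x' ∈ N. Then for every subset N' ⊆ N with |N'| ≥ r + t + 2 and every vector a ∈ {0,1}^d with min_{x∈N'} δ(x,a) ≤ r, it holds for every f ∈ N that δ(f,a) ≤ max_{x ∈ N' \ {f}} δ(x,a). -/

import Mathlib

/-- Δ(a,b): the set of coordinates on which two Boolean vectors differ. -/
def diffSet {d : ℕ} (a b : Fin d → Bool) : Finset (Fin d) :=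
  Finset.univ.filter fun i => a i ≠ b i

lemma diff_card {d} (a b : Fin d → Bool) : hammingDist a b = (diffSet a b).card := rfl

lemma diff_symm {d} (v a x : Fin d → Bool) :
    diffSet x a = symmDiff (diffSet v a) (diffSet v x) := by
  ext i; simp [diffSet, Finset.mem_symmDiff]
  cases v i <;> cases a i <;> cases x i <;> simp

lemma eq_of_diff {d} (v x y : Fin d → Bool) (h : diffSet v x = diffSet v y) : x = y := by
  funext i
  have := Finset.ext_iff.mp h i
  simp [diffSet] at this
  revert this
  cases v i <;> cases x i <;> cases y i <;> simp

theorem statement_1 {d : ℕ} (t r : ℕ) (v : Fin d → Bool)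
    (N : Finset (Fin d → Bool)) (C : Finset (Fin d))
    (hdist : ∀ x ∈ N, hammingDist v x = t)
    (hsun : ∀ x ∈ N, ∀ x' ∈ N, x ≠ x' → diffSet v x ∩ diffSet v x' = C) :
    ∀ N' ⊆ N, r + t + 2 ≤ N'.card →
      ∀ a : Fin d → Bool, (∃ x ∈ N', hammingDist x a ≤ r) →
        ∀ f ∈ N, hammingDist f a ≤ (N'.erase f).sup fun x => hammingDist x a := by
  intro N' hN'N hcard a ha f hfN
  obtain ⟨x₀, hx₀, hx₀r⟩ := ha
  -- the diff cards of elements of N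
  have hDcard : ∀ x ∈ N, (diffSet v x).card = t := by
    intro x hx; rw [← diff_card]; exact hdist x hx
  -- δ(v,a) ≤ t + r
  have hdva : (diffSet v a).card ≤ t + r := by
    have h1 : hammingDist v a ≤ hammingDist v x₀ + hammingDist x₀ a :=
      hammingDist_triangle v x₀ a
    have h2 := hdist x₀ (hN'N hx₀)
    rw [← diff_card]; omega
  -- for every x there is y ∈ N' with y ≠ x
  have hex : ∀ x : Fin d → Bool, ∃ y ∈ N', y ≠ x := by
    intro x
    by_contra h; push_neg at h
    have hsub : N' ⊆ {x} := fun y hy => Finset.mem_singleton.mpr (h y hy)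
    have := Finset.card_le_card hsub
    simp [Finset.card_singleton] at this
    omega
  -- C is contained in each diff set
  have hCsub : ∀ x ∈ N, C ⊆ diffSet v x := by
    intro x hx
    obtain ⟨y, hyN', hyx⟩ := hex x
    rw [← hsun x hx y (hN'N hyN') hyx.symm]
    exact Finset.inter_subset_left
  -- petals are nonempty
  have hPne : ∀ x ∈ N, (diffSet v x \ C).Nonempty := by
    intro x hx
    obtain ⟨y, hyN', hyx⟩ := hex x
    have hyN := hN'N hyN'
    rw [Finset.sdiff_nonempty]
    intro hsub
    have hC : diffSet v x ∩ diffSet v y = C := hsun x hx y hyN hyx.symm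
    have hsub2 : diffSet v x ⊆ diffSet v y := by
      intro i hi
      have : i ∈ diffSet v x ∩ diffSet v y := hC ▸ hsub hi
      exact (Finset.mem_inter.mp this).2
    have heq : diffSet v x = diffSet v y :=
      Finset.eq_of_subset_of_card_le hsub2 (by rw [hDcard x hx, hDcard y hyN])
    exact hyx (eq_of_diff v x y heq).symm
  -- petals are pairwise disjoint
  have hPdis : ∀ x ∈ N, ∀ y ∈ N, x ≠ y →
      Disjoint (diffSet v x \ C) (diffSet v y \ C) := by
    intro x hx y hy hxy
    rw [Finset.disjoint_left]
    intro i hix hiy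
    have hiC : i ∈ C := by
      rw [← hsun x hx y hy hxy]
      exact Finset.mem_inter.mpr ⟨(Finset.mem_sdiff.mp hix).1, (Finset.mem_sdiff.mp hiy).1⟩
    exact (Finset.mem_sdiff.mp hix).2 hiC
  -- there exists x ∈ N'.erase f whose petal misses diffSet v a
  have hkey : ∃ x ∈ N'.erase f, (diffSet v x \ C) ∩ diffSet v a = ∅ := by
    by_contra hcon; push_neg at hcon
    have hne : ∀ x ∈ N'.erase f, ((diffSet v x \ C) ∩ diffSet v a).Nonempty := by
      intro x hx
      exact hcon x hx
    have hmemN : ∀ x ∈ N'.erase f, x ∈ N := fun x hx =>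
      hN'N (Finset.mem_of_mem_erase hx)
    have hpd : ((N'.erase f : Finset (Fin d → Bool)) : Set (Fin d → Bool)).PairwiseDisjoint
        (fun x => (diffSet v x \ C) ∩ diffSet v a) := by
      intro x hx y hy hxy
      have := hPdis x (hmemN x hx) y (hmemN y hy) hxy
      exact (this.mono Finset.inter_subset_left Finset.inter_subset_left)
    have h1 : (N'.erase f).card ≤
        ((N'.erase f).biUnion fun x => (diffSet v x \ C) ∩ diffSet v a).card :=
      Finset.card_le_card_biUnion hpd hne
    have h2 : ((N'.erase f).biUnion fun x => (diffSet v x \ C) ∩ diffSet v a) ⊆ diffSet v a := by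
      intro i hi
      obtain ⟨x, _, hix⟩ := Finset.mem_biUnion.mp hi
      exact (Finset.mem_inter.mp hix).2
    have h3 := Finset.card_le_card h2
    have h4 : N'.card - 1 ≤ (N'.erase f).card := Finset.pred_card_le_card_erase
    omega
  obtain ⟨x, hxe, hxP⟩ := hkey
  have hxN : x ∈ N := hN'N (Finset.mem_of_mem_erase hxe)
  set S := symmDiff (diffSet v a) C with hS
  -- general decomposition
  have hdecomp : ∀ y ∈ N, diffSet y a = symmDiff S (diffSet v y \ C) := by
    intro y hy
    rw [diff_symm v a y]
    have hy1 : diffSet v y = symmDiff C (diffSet v y \ C) := by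
      rw [Finset.disjoint_sdiff.symmDiff_eq_sup]
      exact (Finset.union_sdiff_of_subset (hCsub y hy)).symm
    rw [hS, symmDiff_assoc, ← hy1]
  -- disjointness of S and petal of x
  have hdisj : Disjoint S (diffSet v x \ C) := by
    rw [Finset.disjoint_left]
    intro i hiS hiP
    have hiP' := Finset.mem_sdiff.mp hiP
    rcases Finset.mem_symmDiff.mp hiS with ⟨h, -⟩ | ⟨h, -⟩
    · have : i ∈ (diffSet v x \ C) ∩ diffSet v a := Finset.mem_inter.mpr ⟨hiP, h⟩
      rw [hxP] at this; exact absurd this (Finset.notMem_empty i)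
    · exact hiP'.2 h
  -- petal cards
  have hPcard : ∀ y ∈ N, (diffSet v y \ C).card = t - C.card := by
    intro y hy
    rw [Finset.card_sdiff_of_subset (hCsub y hy), hDcard y hy]
  -- compute δ(x,a)
  have hxval : hammingDist x a = S.card + (t - C.card) := by
    rw [diff_card, hdecomp x hxN, hdisj.symmDiff_eq_sup, Finset.sup_eq_union,
      Finset.card_union_of_disjoint hdisj, hPcard x hxN]
  -- bound δ(f,a)
  have hfval : hammingDist f a ≤ S.card + (t - C.card) := by
    rw [diff_card, hdecomp f hfN]
    calc (symmDiff S (diffSet v f \ C)).card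
        ≤ (S ∪ (diffSet v f \ C)).card := Finset.card_le_card (by
          intro i hi
          rcases Finset.mem_symmDiff.mp hi with ⟨h, -⟩ | ⟨h, -⟩
          · exact Finset.mem_union.mpr (Or.inl h)
          · exact Finset.mem_union.mpr (Or.inr h))
      _ ≤ S.card + (diffSet v f \ C).card := Finset.card_union_le _ _
      _ = S.card + (t - C.card) := by rw [hPcard f hfN]
  calc hammingDist f a ≤ hammingDist x a := by rw [hxval]; exact hfval
    _ ≤ (N'.erase f).sup fun x => hammingDist x a := Finset.le_sup (f := fun y => hammingDist y a) hxe
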